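/- In the unweighted graph G' of the W[1]-hardness construction, if a strategy profile s* of the (k+3)-player competitive diffusion game is a standard Nash equilibrium — meaning k players choose k distinct vertices v_1,…,v_k of V ⊆ V(G'), one player chooses b, and two players choose a_2 and a_3 — then {v_1,…,v_k} is an independent set of the original graph G. -/

import Mathlib

open Classical

noncomputable section

/-- State labels in the competitive diffusion game:
`none` = free (undominated, non-neutral), `some none` = neutral,
`some (some i)` = dominated by player `i`. -/
def initLabel {V : Type*} {k : ℕ} (s : Fin k → V) (v : V) : Option (Option (Fin k)) :=
  if h : ∃! i, s i = v then some (some h.choose)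
  else if _h : (∃ i, s i = v) then some none
  else none

/-- One diffusion step: a free vertex adjacent to vertices dominated by exactly one
player becomes dominated by that player; if adjacent to vertices dominated by two or
more players it becomes neutral. -/
def stepLabel {V : Type*} {k : ℕ} (G : SimpleGraph V) (L : V → Option (Option (Fin k)))
    (v : V) : Option (Option (Fin k)) :=
  match L v with
  | some x => some x
  | none =>
    if h : ∃! i : Fin k, ∃ u, G.Adj u v ∧ L u = some (some i) then some (some h.choose)
    else if _h : (∃ i : Fin k, ∃ u, G.Adj u v ∧ L u = some (some i)) then some none
    else none

/-- The final state of the diffusion process (it stabilizes after `|V|` steps). -/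
def finalLabel {V : Type*} [Fintype V] {k : ℕ} (G : SimpleGraph V) (s : Fin k → V) :
    V → Option (Option (Fin k)) :=
  (fun L v => stepLabel G L v)^[Fintype.card V] (initLabel s)

/-- The utility of player `i`: total weight of the vertices `i` dominates at the end. -/
def utility {V : Type*} [Fintype V] {k : ℕ} (G : SimpleGraph V) (w : V → ℤ)
    (s : Fin k → V) (i : Fin k) : ℤ :=
  ∑ v ∈ Finset.univ.filter (fun v => finalLabel G s v = some (some i)), w v

/-- `s` is a pure Nash equilibrium of the competitive diffusion game `(k, G, w)`. -/
def isNash {V : Type*} [Fintype V] [DecidableEq V] {k : ℕ} (G : SimpleGraph V) (w : V → ℤ)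
    (s : Fin k → V) : Prop :=
  ∀ (i : Fin k) (v' : V), utility G w (Function.update s i v') i ≤ utility G w s i

/-- `G` with weights `w` admits `κ` players with boundary `t`: some pure Nash
equilibrium `s` of `(κ, G, w)` satisfies `ν(s) ≤ t ≤ μ(s)`. -/
def admitsWith {V : Type*} [Fintype V] [DecidableEq V] (G : SimpleGraph V) (w : V → ℤ)
    (κ : ℕ) (t : ℤ) : Prop :=
  ∃ s : Fin κ → V, isNash G w s ∧
    (∀ v : V, utility G w (Fin.snoc s v) (Fin.last κ) ≤ t) ∧
    (∀ i : Fin κ, t ≤ utility G w s i)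

/-- The path on `n` vertices. -/
def pathGraph (n : ℕ) : SimpleGraph (Fin n) :=
  SimpleGraph.fromRel (fun i j => (i : ℕ) + 1 = (j : ℕ))

/-- The unweighted path on `n` vertices admits `κ` players with boundary `t`. -/
def pathAdmits (n κ t : ℕ) : Prop :=
  admitsWith (pathGraph n) (fun _ => (1 : ℤ)) κ (t : ℤ)

/-- Vertices of the unweighted graph `G'` built from `G` on `Fin n`:
component `A` = the 4-path plus `n` pendant leaves on `a_1` and `n` on `a_4`;
component `B` = the original vertices, one subdivision vertex per edge of `G`,
`n − deg(v)` pendant leaves on each vertex `v`, the vertex `b`, and `n³` pendant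
leaves on `b`. -/
abbrev VGp (n : ℕ) (G : SimpleGraph (Fin n)) [DecidableRel G.Adj] :=
  (Fin 4 ⊕ (Fin n ⊕ Fin n)) ⊕
    (Fin n ⊕ (G.edgeSet ⊕ ((Σ v : Fin n, Fin (n - G.degree v)) ⊕ (Unit ⊕ Fin (n ^ 3)))))

/-- Generating relation for `G'`. -/
def relGp (n : ℕ) (G : SimpleGraph (Fin n)) [DecidableRel G.Adj] :
    VGp n G → VGp n G → Prop := fun x y =>
  match x, y with
  -- the path a₁a₂a₃a₄:
  | Sum.inl (Sum.inl i), Sum.inl (Sum.inl i') => (i : ℕ) + 1 = (i' : ℕ)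
  -- n pendant leaves on a₁:
  | Sum.inl (Sum.inl i), Sum.inl (Sum.inr (Sum.inl _)) => (i : ℕ) = 0
  -- n pendant leaves on a₄:
  | Sum.inl (Sum.inl i), Sum.inl (Sum.inr (Sum.inr _)) => (i : ℕ) = 3
  -- each edge e of G is subdivided by the vertex b_e:
  | Sum.inr (Sum.inl v), Sum.inr (Sum.inr (Sum.inl e)) => v ∈ (e : Sym2 (Fin n))
  -- n − deg(v) pendant leaves on each v ∈ V:
  | Sum.inr (Sum.inl v), Sum.inr (Sum.inr (Sum.inr (Sum.inl ⟨v', _⟩))) => v = v'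
  -- b is adjacent to every v ∈ V:
  | Sum.inr (Sum.inl _), Sum.inr (Sum.inr (Sum.inr (Sum.inr (Sum.inl _)))) => True
  -- n³ pendant leaves on b:
  | Sum.inr (Sum.inr (Sum.inr (Sum.inr (Sum.inl _)))),
      Sum.inr (Sum.inr (Sum.inr (Sum.inr (Sum.inr _)))) => True
  | _, _ => False

/-- The unweighted graph `G'` of the W[1]-hardness construction. -/
def Gp (n : ℕ) (G : SimpleGraph (Fin n)) [DecidableRel G.Adj] : SimpleGraph (VGp n G) :=
  SimpleGraph.fromRel (relGp n G)

/-- The standard profile on `G'`: the first `k` players on the original vertices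
`f 0, …, f (k−1)`, one player on `b`, and two players on `a_2` and `a_3`. -/
def profGp (n : ℕ) (G : SimpleGraph (Fin n)) [DecidableRel G.Adj] (k : ℕ)
    (f : Fin k → Fin n) : Fin (k + 3) → VGp n G := fun i =>
  if h : (i : ℕ) < k then Sum.inr (Sum.inl (f ⟨i, h⟩))
  else if (i : ℕ) = k then Sum.inr (Sum.inr (Sum.inr (Sum.inr (Sum.inl ()))))
  else if (i : ℕ) = k + 1 then Sum.inl (Sum.inl (1 : Fin 4))
  else Sum.inl (Sum.inl (2 : Fin 4))
-- helper lemma experiments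
section Helpers
variable {V : Type*} {k : ℕ}

lemma initLabel_eq_some_iff {s : Fin k → V} (hs : Function.Injective s) (x : V) (i : Fin k) :
    initLabel s x = some (some i) ↔ s i = x := by
  constructor
  · intro h
    unfold initLabel at h
    split_ifs at h with h1 h2
    · simp only [Option.some.injEq] at h
      rw [← h]; exact h1.choose_spec.1
    · simp at h
  · intro h
    have hu : ∃! j, s j = x := ⟨i, h, fun j hj => hs (hj.trans h.symm)⟩
    unfold initLabel
    rw [dif_pos hu]
    have := hu.choose_spec.1
    have : hu.choose = i := hs (this.trans h.symm)
    rw [this]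

lemma initLabel_eq_none {s : Fin k → V} (x : V) (h : ∀ i, s i ≠ x) : initLabel s x = none := by
  unfold initLabel
  rw [dif_neg, dif_neg]
  · rintro ⟨i, hi⟩; exact h i hi
  · rintro ⟨i, hi, -⟩; exact h i hi

variable {G : SimpleGraph V} {L : V → Option (Option (Fin k))}

lemma stepLabel_some {x : V} {y} (h : L x = some y) : stepLabel G L x = some y := by
  unfold stepLabel; rw [h]

lemma stepLabel_dom {x : V} {i0 : Fin k} (hx : L x = none)
    (h1 : ∃ u, G.Adj u x ∧ L u = some (some i0))
    (h2 : ∀ i u, G.Adj u x → L u = some (some i) → i = i0) :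
    stepLabel G L x = some (some i0) := by
  have hu : ∃! i : Fin k, ∃ u, G.Adj u x ∧ L u = some (some i) :=
    ⟨i0, h1, fun j ⟨u, hu1, hu2⟩ => h2 j u hu1 hu2⟩
  unfold stepLabel
  rw [hx]
  simp only [dif_pos hu]
  obtain ⟨u, hu1, hu2⟩ := hu.choose_spec.1
  rw [h2 _ u hu1 hu2]

lemma stepLabel_neutral {x : V} {i1 i2 : Fin k} {u1 u2 : V} (hx : L x = none)
    (hne : i1 ≠ i2) (ha1 : G.Adj u1 x) (hl1 : L u1 = some (some i1))
    (ha2 : G.Adj u2 x) (hl2 : L u2 = some (some i2)) :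
    stepLabel G L x = some none := by
  unfold stepLabel
  rw [hx]
  rw [dif_neg, dif_pos ⟨i1, u1, ha1, hl1⟩]
  rintro ⟨j, hj, hun⟩
  exact hne ((hun i1 ⟨u1, ha1, hl1⟩).trans (hun i2 ⟨u2, ha2, hl2⟩).symm)

lemma stepLabel_none {x : V} (hx : L x = none)
    (h : ∀ i u, G.Adj u x → L u ≠ some (some i)) :
    stepLabel G L x = none := by
  unfold stepLabel
  rw [hx]
  rw [dif_neg, dif_neg]
  · rintro ⟨i, u, hu1, hu2⟩; exact h i u hu1 hu2
  · rintro ⟨i, ⟨u, hu1, hu2⟩, -⟩; exact h i u hu1 hu2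

end Helpers
section Generic
variable {n : ℕ} {G : SimpleGraph (Fin n)} [DecidableRel G.Adj] {m : ℕ}

/-- Labels after one diffusion step for a standard-shaped profile. -/
def L1f (σ : Fin m → VGp n G) (K K1 K2 : Fin m) : VGp n G → Option (Option (Fin m)) := fun x =>
  match x with
  | Sum.inl (Sum.inl i) =>
      if (i : ℕ) = 0 then
        some (some (if h : ∃ j, σ j = Sum.inl (Sum.inl (0 : Fin 4)) then h.choose else K1))
      else if (i : ℕ) = 1 then some (some K1) else some (some K2)
  | Sum.inl (Sum.inr (Sum.inl _)) =>
      if h : ∃ j, σ j = Sum.inl (Sum.inl (0 : Fin 4)) then some (some h.choose) else none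
  | Sum.inl (Sum.inr (Sum.inr _)) => none
  | Sum.inr (Sum.inl p) =>
      some (some (if h : ∃ j, σ j = Sum.inr (Sum.inl p) then h.choose else K))
  | Sum.inr (Sum.inr (Sum.inl e)) =>
      if h : ∃! j, ∃ p, σ j = Sum.inr (Sum.inl p) ∧ p ∈ (e : Sym2 (Fin n)) then
        some (some h.choose)
      else if (∃ j, ∃ p, σ j = Sum.inr (Sum.inl p) ∧ p ∈ (e : Sym2 (Fin n))) then some none
      else none
  | Sum.inr (Sum.inr (Sum.inr (Sum.inl ⟨p, _⟩))) =>
      if h : ∃ j, σ j = Sum.inr (Sum.inl p) then some (some h.choose) else none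
  | Sum.inr (Sum.inr (Sum.inr (Sum.inr (Sum.inl _)))) => some (some K)
  | Sum.inr (Sum.inr (Sum.inr (Sum.inr (Sum.inr _)))) => some (some K)

/-- Final labels for a standard-shaped profile. -/
def L2f (σ : Fin m → VGp n G) (K K1 K2 : Fin m) : VGp n G → Option (Option (Fin m)) := fun x =>
  match x with
  | Sum.inl (Sum.inl i) =>
      if (i : ℕ) = 0 then
        some (some (if h : ∃ j, σ j = Sum.inl (Sum.inl (0 : Fin 4)) then h.choose else K1))
      else if (i : ℕ) = 1 then some (some K1) else some (some K2)
  | Sum.inl (Sum.inr (Sum.inl _)) =>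
      some (some (if h : ∃ j, σ j = Sum.inl (Sum.inl (0 : Fin 4)) then h.choose else K1))
  | Sum.inl (Sum.inr (Sum.inr _)) => some (some K2)
  | Sum.inr (Sum.inl p) =>
      some (some (if h : ∃ j, σ j = Sum.inr (Sum.inl p) then h.choose else K))
  | Sum.inr (Sum.inr (Sum.inl e)) =>
      if h : ∃! j, ∃ p, σ j = Sum.inr (Sum.inl p) ∧ p ∈ (e : Sym2 (Fin n)) then
        some (some h.choose)
      else if (∃ j, ∃ p, σ j = Sum.inr (Sum.inl p) ∧ p ∈ (e : Sym2 (Fin n))) then some none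
      else some (some K)
  | Sum.inr (Sum.inr (Sum.inr (Sum.inl ⟨p, _⟩))) =>
      some (some (if h : ∃ j, σ j = Sum.inr (Sum.inl p) then h.choose else K))
  | Sum.inr (Sum.inr (Sum.inr (Sum.inr (Sum.inl _)))) => some (some K)
  | Sum.inr (Sum.inr (Sum.inr (Sum.inr (Sum.inr _)))) => some (some K)

/-- Hypotheses describing a standard-shaped profile. -/
structure StdProf (σ : Fin m → VGp n G) (K K1 K2 : Fin m) : Prop where
  inj : Function.Injective σ
  hK : σ K = Sum.inr (Sum.inr (Sum.inr (Sum.inr (Sum.inl ()))))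
  hK1 : σ K1 = Sum.inl (Sum.inl (1 : Fin 4))
  hK2 : σ K2 = Sum.inl (Sum.inl (2 : Fin 4))
  hpos : ∀ j, (∃ p, σ j = Sum.inr (Sum.inl p)) ∨ σ j = Sum.inl (Sum.inl (0 : Fin 4)) ∨
      j = K ∨ j = K1 ∨ j = K2

namespace StdProf
variable {σ : Fin m → VGp n G} {K K1 K2 : Fin m}

/-- σ j is never on any of the listed vertex shapes. -/
lemma shape (h : StdProf σ K K1 K2) (j : Fin m) :
    (∃ p, σ j = Sum.inr (Sum.inl p)) ∨ σ j = Sum.inl (Sum.inl (0 : Fin 4)) ∨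
    σ j = Sum.inr (Sum.inr (Sum.inr (Sum.inr (Sum.inl ())))) ∨
    σ j = Sum.inl (Sum.inl (1 : Fin 4)) ∨ σ j = Sum.inl (Sum.inl (2 : Fin 4)) := by
  rcases h.hpos j with hp | hp | rfl | rfl | rfl
  · exact Or.inl hp
  · exact Or.inr (Or.inl hp)
  · exact Or.inr (Or.inr (Or.inl h.hK))
  · exact Or.inr (Or.inr (Or.inr (Or.inl h.hK1)))
  · exact Or.inr (Or.inr (Or.inr (Or.inr h.hK2)))

lemma not_a3 (h : StdProf σ K K1 K2) (j : Fin m) : σ j ≠ Sum.inl (Sum.inl (3 : Fin 4)) := by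
  rcases h.shape j with ⟨p, hp⟩ | hp | hp | hp | hp <;> (simp [hp, Fin.ext_iff]; try decide)

lemma not_a1leaf (h : StdProf σ K K1 K2) (j : Fin m) (t : Fin n) : σ j ≠ Sum.inl (Sum.inr (Sum.inl t)) := by
  rcases h.shape j with ⟨p, hp⟩ | hp | hp | hp | hp <;> simp [hp]

lemma not_a4leaf (h : StdProf σ K K1 K2) (j : Fin m) (t : Fin n) : σ j ≠ Sum.inl (Sum.inr (Sum.inr t)) := by
  rcases h.shape j with ⟨p, hp⟩ | hp | hp | hp | hp <;> simp [hp]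

lemma not_be (h : StdProf σ K K1 K2) (j : Fin m) (e : G.edgeSet) : σ j ≠ Sum.inr (Sum.inr (Sum.inl e)) := by
  rcases h.shape j with ⟨p, hp⟩ | hp | hp | hp | hp <;> simp [hp]

lemma not_vleaf (h : StdProf σ K K1 K2) (j : Fin m) (x : Σ p : Fin n, Fin (n - G.degree p)) :
    σ j ≠ Sum.inr (Sum.inr (Sum.inr (Sum.inl x))) := by
  rcases h.shape j with ⟨p, hp⟩ | hp | hp | hp | hp <;> simp [hp]

lemma not_bleaf (h : StdProf σ K K1 K2) (j : Fin m) (t : Fin (n ^ 3)) :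
    σ j ≠ Sum.inr (Sum.inr (Sum.inr (Sum.inr (Sum.inr t)))) := by
  rcases h.shape j with ⟨p, hp⟩ | hp | hp | hp | hp <;> simp [hp]

lemma eq_K (h : StdProf σ K K1 K2) {j : Fin m} (hj : σ j = Sum.inr (Sum.inr (Sum.inr (Sum.inr (Sum.inl ()))))) :
    j = K := h.inj (hj.trans h.hK.symm)

lemma eq_K1 (h : StdProf σ K K1 K2) {j : Fin m} (hj : σ j = Sum.inl (Sum.inl (1 : Fin 4))) : j = K1 :=
  h.inj (hj.trans h.hK1.symm)

lemma eq_K2 (h : StdProf σ K K1 K2) {j : Fin m} (hj : σ j = Sum.inl (Sum.inl (2 : Fin 4))) : j = K2 :=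
  h.inj (hj.trans h.hK2.symm)

end StdProf
end Generic
section ValLemmas
@[simp] lemma fin4_val0 : ((0 : Fin 4) : ℕ) = 0 := rfl
@[simp] lemma fin4_val1 : ((1 : Fin 4) : ℕ) = 1 := rfl
@[simp] lemma fin4_val2 : ((2 : Fin 4) : ℕ) = 2 := rfl
@[simp] lemma fin4_val3 : ((3 : Fin 4) : ℕ) = 3 := rfl
end ValLemmas
section StepInit
variable {n : ℕ} {G : SimpleGraph (Fin n)} [DecidableRel G.Adj] {m : ℕ}
variable {σ : Fin m → VGp n G} {K K1 K2 : Fin m}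

lemma adj_helper {x y : VGp n G} (hne : x ≠ y) (hr : relGp n G x y ∨ relGp n G y x) :
    (Gp n G).Adj x y := by
  rw [Gp, SimpleGraph.fromRel_adj]; exact ⟨hne, hr⟩

lemma adj_dest {x y : VGp n G} (h : (Gp n G).Adj x y) :
    relGp n G x y ∨ relGp n G y x := by
  rw [Gp, SimpleGraph.fromRel_adj] at h; exact h.2

lemma step_init (h : StdProf σ K K1 K2) :
    stepLabel (Gp n G) (initLabel σ) = L1f σ K K1 K2 := by
  have inv : ∀ (u : VGp n G) i, initLabel σ u = some (some i) → σ i = u :=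
    fun u i hi => (initLabel_eq_some_iff h.inj u i).1 hi
  funext x
  rcases x with ((i | (t | t)) | (p | (e | (⟨p, t⟩ | (⟨⟩ | t)))))
  · -- path vertices a_i
    fin_cases i
    · -- a0
      show _ = L1f σ K K1 K2 (Sum.inl (Sum.inl 0))
      simp only [L1f, fin4_val0]
      norm_num
      by_cases hA0 : ∃ j, σ j = Sum.inl (Sum.inl (0 : Fin 4))
      · rw [dif_pos hA0]
        exact stepLabel_some ((initLabel_eq_some_iff h.inj _ _).2 hA0.choose_spec)
      · rw [dif_neg hA0]
        refine stepLabel_dom (initLabel_eq_none _ (fun j hj => hA0 ⟨j, hj⟩)) ?_ ?_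
        · exact ⟨Sum.inl (Sum.inl 1), adj_helper (by simp [Fin.ext_iff])
            (Or.inr (by simp [relGp])), (initLabel_eq_some_iff h.inj _ _).2 h.hK1⟩
        · intro i u hadj hl
          have hσ := inv u i hl
          rcases adj_dest hadj with hr | hr <;>
            rcases u with ((i' | (t' | t')) | (p' | (e' | (⟨p', t'⟩ | (⟨⟩ | t'))))) <;>
            simp [relGp] at hr
          · have hi : i' = 1 := Fin.ext (by simp only [fin4_val1]; omega)
            subst hi; exact h.eq_K1 hσ
          · exact absurd hσ (h.not_a1leaf i t')
    · -- a1
      show _ = L1f σ K K1 K2 (Sum.inl (Sum.inl 1))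
      simp only [L1f, fin4_val1]
      norm_num
      exact stepLabel_some ((initLabel_eq_some_iff h.inj _ _).2 h.hK1)
    · -- a2
      show _ = L1f σ K K1 K2 (Sum.inl (Sum.inl 2))
      simp only [L1f, fin4_val2]
      norm_num
      exact stepLabel_some ((initLabel_eq_some_iff h.inj _ _).2 h.hK2)
    · -- a3
      show _ = L1f σ K K1 K2 (Sum.inl (Sum.inl 3))
      simp only [L1f, fin4_val3]
      norm_num
      refine stepLabel_dom (initLabel_eq_none _ (h.not_a3)) ?_ ?_
      · exact ⟨Sum.inl (Sum.inl 2), adj_helper (by simp [Fin.ext_iff])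
          (Or.inl (by simp [relGp])), (initLabel_eq_some_iff h.inj _ _).2 h.hK2⟩
      · intro i u hadj hl
        have hσ := inv u i hl
        rcases adj_dest hadj with hr | hr <;>
          rcases u with ((i' | (t' | t')) | (p' | (e' | (⟨p', t'⟩ | (⟨⟩ | t'))))) <;>
          simp [relGp] at hr
        · have hi : i' = 2 := Fin.ext (by simp only [fin4_val2]; omega)
          subst hi; exact h.eq_K2 hσ
        · have := i'.isLt; omega
        · exact absurd hσ (h.not_a4leaf i t')
  · -- a1-leaves
    show _ = L1f σ K K1 K2 (Sum.inl (Sum.inr (Sum.inl t)))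
    simp only [L1f]
    have hinit : initLabel σ (Sum.inl (Sum.inr (Sum.inl t))) = none :=
      initLabel_eq_none _ (fun j => h.not_a1leaf j t)
    by_cases hA0 : ∃ j, σ j = Sum.inl (Sum.inl (0 : Fin 4))
    · rw [dif_pos hA0]
      refine stepLabel_dom hinit ?_ ?_
      · exact ⟨Sum.inl (Sum.inl 0), adj_helper (by simp) (Or.inl (by simp [relGp])),
          (initLabel_eq_some_iff h.inj _ _).2 hA0.choose_spec⟩
      · intro i u hadj hl
        have hσ := inv u i hl
        rcases adj_dest hadj with hr | hr <;>
          rcases u with ((i' | (t' | t')) | (p' | (e' | (⟨p', t'⟩ | (⟨⟩ | t'))))) <;>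
          simp [relGp] at hr
        have hi : i' = 0 := Fin.ext (by simp only [fin4_val0]; omega)
        subst hi
        exact h.inj (hσ.trans hA0.choose_spec.symm)
    · rw [dif_neg hA0]
      refine stepLabel_none hinit ?_
      intro i u hadj hl
      have hσ := inv u i hl
      rcases adj_dest hadj with hr | hr <;>
        rcases u with ((i' | (t' | t')) | (p' | (e' | (⟨p', t'⟩ | (⟨⟩ | t'))))) <;>
        simp [relGp] at hr
      have hi : i' = 0 := Fin.ext (by simp only [fin4_val0]; omega)
      subst hi
      exact hA0 ⟨i, hσ⟩
  · -- a4-leaves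
    show _ = L1f σ K K1 K2 (Sum.inl (Sum.inr (Sum.inr t)))
    simp only [L1f]
    refine stepLabel_none (initLabel_eq_none _ (fun j => h.not_a4leaf j t)) ?_
    intro i u hadj hl
    have hσ := inv u i hl
    rcases adj_dest hadj with hr | hr <;>
      rcases u with ((i' | (t' | t')) | (p' | (e' | (⟨p', t'⟩ | (⟨⟩ | t'))))) <;>
      simp [relGp] at hr
    have hi : i' = 3 := Fin.ext (by simp only [fin4_val3]; omega)
    subst hi
    exact absurd hσ (h.not_a3 i)
  · -- original vertices
    show _ = L1f σ K K1 K2 (Sum.inr (Sum.inl p))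
    simp only [L1f]
    by_cases hOp : ∃ j, σ j = Sum.inr (Sum.inl p)
    · rw [dif_pos hOp]
      exact stepLabel_some ((initLabel_eq_some_iff h.inj _ _).2 hOp.choose_spec)
    · rw [dif_neg hOp]
      refine stepLabel_dom (initLabel_eq_none _ (fun j hj => hOp ⟨j, hj⟩)) ?_ ?_
      · exact ⟨Sum.inr (Sum.inr (Sum.inr (Sum.inr (Sum.inl ())))),
          adj_helper (by simp) (Or.inr (by simp [relGp])),
          (initLabel_eq_some_iff h.inj _ _).2 h.hK⟩
      · intro i u hadj hl
        have hσ := inv u i hl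
        rcases adj_dest hadj with hr | hr <;>
          rcases u with ((i' | (t' | t')) | (p' | (e' | (⟨p', t'⟩ | (⟨⟩ | t'))))) <;>
          simp [relGp] at hr
        · exact absurd hσ (h.not_be i e')
        · exact absurd hσ (h.not_vleaf i ⟨p', t'⟩)
        · exact h.eq_K hσ
  · -- subdivision vertices b_e
    show _ = L1f σ K K1 K2 (Sum.inr (Sum.inr (Sum.inl e)))
    simp only [L1f]
    have hinit : initLabel σ (Sum.inr (Sum.inr (Sum.inl e))) = none :=
      initLabel_eq_none _ (fun j => h.not_be j e)
    have hdominv : ∀ i u, (Gp n G).Adj u (Sum.inr (Sum.inr (Sum.inl e))) →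
        initLabel σ u = some (some i) →
        ∃ p, σ i = Sum.inr (Sum.inl p) ∧ p ∈ (e : Sym2 (Fin n)) := by
      intro i u hadj hl
      have hσ := inv u i hl
      rcases adj_dest hadj with hr | hr <;>
        rcases u with ((i' | (t' | t')) | (p' | (e' | (⟨p', t'⟩ | (⟨⟩ | t'))))) <;>
        simp [relGp] at hr
      exact ⟨p', hσ, hr⟩
    by_cases hQu : ∃! j, ∃ p, σ j = Sum.inr (Sum.inl p) ∧ p ∈ (e : Sym2 (Fin n))
    · rw [dif_pos hQu]
      obtain ⟨p0, hσ0, hp0⟩ := hQu.choose_spec.1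
      refine stepLabel_dom hinit ?_ ?_
      · exact ⟨Sum.inr (Sum.inl p0), adj_helper (by simp) (Or.inl (by simp [relGp, hp0])),
          (initLabel_eq_some_iff h.inj _ _).2 hσ0⟩
      · intro i u hadj hl
        exact hQu.choose_spec.2 i (hdominv i u hadj hl)
    · rw [dif_neg hQu]
      by_cases hQe : ∃ j, ∃ p, σ j = Sum.inr (Sum.inl p) ∧ p ∈ (e : Sym2 (Fin n))
      · rw [if_pos hQe]
        obtain ⟨j1, p1, hσ1, hp1⟩ := hQe
        have hne' : ¬∀ y, (∃ p, σ y = Sum.inr (Sum.inl p) ∧ p ∈ (e : Sym2 (Fin n))) → y = j1 :=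
          fun hall => hQu ⟨j1, ⟨p1, hσ1, hp1⟩, hall⟩
        push_neg at hne'
        obtain ⟨j2, ⟨p2, hσ2, hp2⟩, hne12⟩ := hne'
        exact stepLabel_neutral hinit (Ne.symm hne12)
          (adj_helper (by simp) (Or.inl (by simp [relGp, hp1])))
          ((initLabel_eq_some_iff h.inj _ _).2 hσ1)
          (adj_helper (by simp) (Or.inl (by simp [relGp, hp2])))
          ((initLabel_eq_some_iff h.inj _ _).2 hσ2)
      · rw [if_neg hQe]
        refine stepLabel_none hinit ?_
        intro i u hadj hl
        exact hQe ⟨i, hdominv i u hadj hl⟩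
  · -- leaves of original vertices
    show _ = L1f σ K K1 K2 (Sum.inr (Sum.inr (Sum.inr (Sum.inl ⟨p, t⟩))))
    simp only [L1f]
    have hinit : initLabel σ (Sum.inr (Sum.inr (Sum.inr (Sum.inl ⟨p, t⟩)))) = none :=
      initLabel_eq_none _ (fun j => h.not_vleaf j ⟨p, t⟩)
    have hdominv : ∀ i u, (Gp n G).Adj u (Sum.inr (Sum.inr (Sum.inr (Sum.inl ⟨p, t⟩)))) →
        initLabel σ u = some (some i) → σ i = Sum.inr (Sum.inl p) := by
      intro i u hadj hl
      have hσ := inv u i hl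
      rcases adj_dest hadj with hr | hr <;>
        rcases u with ((i' | (t' | t')) | (p' | (e' | (⟨p', t'⟩ | (⟨⟩ | t'))))) <;>
        simp [relGp] at hr
      exact hr ▸ hσ
    by_cases hOp : ∃ j, σ j = Sum.inr (Sum.inl p)
    · rw [dif_pos hOp]
      refine stepLabel_dom hinit ?_ ?_
      · exact ⟨Sum.inr (Sum.inl p), adj_helper (by simp) (Or.inl (by simp [relGp])),
          (initLabel_eq_some_iff h.inj _ _).2 hOp.choose_spec⟩
      · intro i u hadj hl
        exact h.inj ((hdominv i u hadj hl).trans hOp.choose_spec.symm)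
    · rw [dif_neg hOp]
      refine stepLabel_none hinit ?_
      intro i u hadj hl
      exact hOp ⟨i, hdominv i u hadj hl⟩
  · -- b
    show _ = L1f σ K K1 K2 (Sum.inr (Sum.inr (Sum.inr (Sum.inr (Sum.inl ())))))
    simp only [L1f]
    exact stepLabel_some ((initLabel_eq_some_iff h.inj _ _).2 h.hK)
  · -- leaves of b
    show _ = L1f σ K K1 K2 (Sum.inr (Sum.inr (Sum.inr (Sum.inr (Sum.inr t)))))
    simp only [L1f]
    refine stepLabel_dom (initLabel_eq_none _ (fun j => h.not_bleaf j t)) ?_ ?_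
    · exact ⟨Sum.inr (Sum.inr (Sum.inr (Sum.inr (Sum.inl ())))),
        adj_helper (by simp) (Or.inl (by simp [relGp])),
        (initLabel_eq_some_iff h.inj _ _).2 h.hK⟩
    · intro i u hadj hl
      have hσ := inv u i hl
      rcases adj_dest hadj with hr | hr <;>
        rcases u with ((i' | (t' | t')) | (p' | (e' | (⟨p', t'⟩ | (⟨⟩ | t'))))) <;>
        simp [relGp] at hr
      exact h.eq_K hσ
end StepInit
section StepL1
variable {n : ℕ} {G : SimpleGraph (Fin n)} [DecidableRel G.Adj] {m : ℕ}
variable {σ : Fin m → VGp n G} {K K1 K2 : Fin m}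

lemma step_L1 (h : StdProf σ K K1 K2) :
    stepLabel (Gp n G) (L1f σ K K1 K2) = L2f σ K K1 K2 := by
  funext x
  rcases x with ((i | (t | t)) | (p | (e | (⟨p, t⟩ | (⟨⟩ | t)))))
  · -- path vertices: all already labeled in L1f, and L1f = L2f there
    have hsome : ∃ y, L1f σ K K1 K2 (Sum.inl (Sum.inl i)) = some y ∧
        L2f σ K K1 K2 (Sum.inl (Sum.inl i)) = some y := by
      simp only [L1f, L2f]
      split_ifs <;> exact ⟨_, rfl, rfl⟩
    obtain ⟨y, h1, h2⟩ := hsome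
    rw [stepLabel_some h1, h2]
  · -- a1-leaves
    show _ = L2f σ K K1 K2 (Sum.inl (Sum.inr (Sum.inl t)))
    simp only [L2f]
    by_cases hA0 : ∃ j, σ j = Sum.inl (Sum.inl (0 : Fin 4))
    · rw [dif_pos hA0]
      exact stepLabel_some (by simp only [L1f]; rw [dif_pos hA0])
    · rw [dif_neg hA0]
      have hnone : L1f σ K K1 K2 (Sum.inl (Sum.inr (Sum.inl t))) = none := by
        simp only [L1f]; rw [dif_neg hA0]
      refine stepLabel_dom hnone ?_ ?_
      · refine ⟨Sum.inl (Sum.inl 0), adj_helper (by simp) (Or.inl (by simp [relGp])), ?_⟩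
        simp only [L1f, fin4_val0, if_true]
        rw [dif_neg hA0]
      · intro i u hadj hl
        rcases adj_dest hadj with hr | hr <;>
          rcases u with ((i' | (t' | t')) | (p' | (e' | (⟨p', t'⟩ | (⟨⟩ | t'))))) <;>
          simp [relGp] at hr
        have hi : i' = 0 := Fin.ext (by simp only [fin4_val0]; omega)
        subst hi
        simp only [L1f, fin4_val0, if_true] at hl
        rw [dif_neg hA0] at hl
        simpa using hl.symm
  · -- a4-leaves
    show _ = L2f σ K K1 K2 (Sum.inl (Sum.inr (Sum.inr t)))
    simp only [L2f]
    have hnone : L1f σ K K1 K2 (Sum.inl (Sum.inr (Sum.inr t))) = none := by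
      simp only [L1f]
    refine stepLabel_dom hnone ?_ ?_
    · refine ⟨Sum.inl (Sum.inl 3), adj_helper (by simp) (Or.inl (by simp [relGp])), ?_⟩
      simp only [L1f, fin4_val3]
      norm_num
    · intro i u hadj hl
      rcases adj_dest hadj with hr | hr <;>
        rcases u with ((i' | (t' | t')) | (p' | (e' | (⟨p', t'⟩ | (⟨⟩ | t'))))) <;>
        simp [relGp] at hr
      have hi : i' = 3 := Fin.ext (by simp only [fin4_val3]; omega)
      subst hi
      simp only [L1f, fin4_val3] at hl
      norm_num at hl
      exact hl.symm
  · -- original vertices: labeled in L1f, same value in L2f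
    have h1 : L1f σ K K1 K2 (Sum.inr (Sum.inl p)) =
        some (some (if h : ∃ j, σ j = Sum.inr (Sum.inl p) then h.choose else K)) := by
      simp only [L1f]
    rw [stepLabel_some h1]
    simp only [L2f]
  · -- subdivision vertices
    show _ = L2f σ K K1 K2 (Sum.inr (Sum.inr (Sum.inl e)))
    by_cases hQu : ∃! j, ∃ p, σ j = Sum.inr (Sum.inl p) ∧ p ∈ (e : Sym2 (Fin n))
    · have h1 : L1f σ K K1 K2 (Sum.inr (Sum.inr (Sum.inl e))) = some (some hQu.choose) := by
        simp only [L1f]; rw [dif_pos hQu]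
      rw [stepLabel_some h1]
      simp only [L2f]; rw [dif_pos hQu]
    · by_cases hQe : ∃ j, ∃ p, σ j = Sum.inr (Sum.inl p) ∧ p ∈ (e : Sym2 (Fin n))
      · have h1 : L1f σ K K1 K2 (Sum.inr (Sum.inr (Sum.inl e))) = some none := by
          simp only [L1f]; rw [dif_neg hQu, if_pos hQe]
        rw [stepLabel_some h1]
        simp only [L2f]; rw [dif_neg hQu, if_pos hQe]
      · have hnone : L1f σ K K1 K2 (Sum.inr (Sum.inr (Sum.inl e))) = none := by
          simp only [L1f]; rw [dif_neg hQu, if_neg hQe]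
        have hval : ∀ p : Fin n, p ∈ (e : Sym2 (Fin n)) →
            L1f σ K K1 K2 (Sum.inr (Sum.inl p)) = some (some K) := by
          intro p hp
          simp only [L1f]
          rw [dif_neg (fun ⟨j, hj⟩ => hQe ⟨j, p, hj, hp⟩)]
        have hL2 : L2f σ K K1 K2 (Sum.inr (Sum.inr (Sum.inl e))) = some (some K) := by
          simp only [L2f]; rw [dif_neg hQu, if_neg hQe]
        rw [hL2]
        refine stepLabel_dom hnone ?_ ?_
        · exact ⟨Sum.inr (Sum.inl (e : Sym2 (Fin n)).out.1),
            adj_helper (by simp) (Or.inl (by simp [relGp, Sym2.out_fst_mem])),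
            hval _ (Sym2.out_fst_mem _)⟩
        · intro i u hadj hl
          rcases adj_dest hadj with hr | hr <;>
            rcases u with ((i' | (t' | t')) | (p' | (e' | (⟨p', t'⟩ | (⟨⟩ | t'))))) <;>
            simp [relGp] at hr
          rw [hval p' hr] at hl
          simpa using hl.symm
  · -- leaves of original vertices
    show _ = L2f σ K K1 K2 (Sum.inr (Sum.inr (Sum.inr (Sum.inl ⟨p, t⟩))))
    simp only [L2f]
    by_cases hOp : ∃ j, σ j = Sum.inr (Sum.inl p)
    · rw [dif_pos hOp]
      exact stepLabel_some (by simp only [L1f]; rw [dif_pos hOp])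
    · rw [dif_neg hOp]
      have hnone : L1f σ K K1 K2 (Sum.inr (Sum.inr (Sum.inr (Sum.inl ⟨p, t⟩)))) = none := by
        simp only [L1f]; rw [dif_neg hOp]
      have hval : L1f σ K K1 K2 (Sum.inr (Sum.inl p)) = some (some K) := by
        simp only [L1f]; rw [dif_neg hOp]
      refine stepLabel_dom hnone ?_ ?_
      · exact ⟨Sum.inr (Sum.inl p), adj_helper (by simp) (Or.inl (by simp [relGp])), hval⟩
      · intro i u hadj hl
        rcases adj_dest hadj with hr | hr <;>
          rcases u with ((i' | (t' | t')) | (p' | (e' | (⟨p', t'⟩ | (⟨⟩ | t'))))) <;>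
          simp [relGp] at hr
        subst hr
        rw [hval] at hl
        simpa using hl.symm
  · -- b
    have h1 : L1f σ K K1 K2 (Sum.inr (Sum.inr (Sum.inr (Sum.inr (Sum.inl ()))))) =
        some (some K) := by simp only [L1f]
    rw [stepLabel_some h1]
    simp only [L2f]
  · -- leaves of b
    have h1 : L1f σ K K1 K2 (Sum.inr (Sum.inr (Sum.inr (Sum.inr (Sum.inr t))))) =
        some (some K) := by simp only [L1f]
    rw [stepLabel_some h1]
    simp only [L2f]
end StepL1
section Final
variable {n : ℕ} {G : SimpleGraph (Fin n)} [DecidableRel G.Adj] {m : ℕ}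
variable {σ : Fin m → VGp n G} {K K1 K2 : Fin m}

lemma L2f_total (x : VGp n G) : ∃ y, L2f σ K K1 K2 x = some y := by
  rcases x with ((i | (t | t)) | (p | (e | (⟨p, t⟩ | (⟨⟩ | t))))) <;>
    simp only [L2f] <;> first | (split_ifs <;> exact ⟨_, rfl⟩) | exact ⟨_, rfl⟩

lemma step_L2 : stepLabel (Gp n G) (L2f σ K K1 K2) = L2f σ K K1 K2 := by
  funext x
  obtain ⟨y, hy⟩ := L2f_total (σ := σ) (K := K) (K1 := K1) (K2 := K2) x
  rw [stepLabel_some hy, hy]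

lemma final_eq (h : StdProf σ K K1 K2) :
    finalLabel (Gp n G) σ = L2f σ K K1 K2 := by
  have hcard : 2 ≤ Fintype.card (VGp n G) := by
    rw [Fintype.card_sum]
    have h4 : Fintype.card (Fin 4 ⊕ (Fin n ⊕ Fin n)) = 4 + (n + n) := by simp
    omega
  unfold finalLabel
  have e1 : (fun (L : VGp n G → Option (Option (Fin m))) v => stepLabel (Gp n G) L v) =
      stepLabel (Gp n G) := rfl
  rw [e1]
  obtain ⟨r, hr⟩ : ∃ r, Fintype.card (VGp n G) = r + 2 :=
    ⟨Fintype.card (VGp n G) - 2, (Nat.sub_add_cancel hcard).symm⟩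
  rw [hr, Function.iterate_add_apply]
  have h2 : (stepLabel (Gp n G))^[2] (initLabel σ) = L2f σ K K1 K2 := by
    show stepLabel (Gp n G) (stepLabel (Gp n G) (initLabel σ)) = _
    rw [step_init h, step_L1 h]
  rw [h2]
  exact Function.iterate_fixed step_L2 r
end Final
section Inst
variable {n k : ℕ} {G : SimpleGraph (Fin n)} [DecidableRel G.Adj]

/-- The three special players. -/
def pK (k : ℕ) : Fin (k + 3) := ⟨k, by omega⟩
def pK1 (k : ℕ) : Fin (k + 3) := ⟨k + 1, by omega⟩
def pK2 (k : ℕ) : Fin (k + 3) := ⟨k + 2, by omega⟩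

lemma profGp_lt (v : Fin k → Fin n) (j : Fin (k + 3)) (hj : (j : ℕ) < k) :
    profGp n G k v j = Sum.inr (Sum.inl (v ⟨j, hj⟩)) := by
  simp only [profGp, dif_pos hj]

lemma profGp_K (v : Fin k → Fin n) :
    profGp n G k v (pK k) = Sum.inr (Sum.inr (Sum.inr (Sum.inr (Sum.inl ())))) := by
  simp only [profGp, pK]
  rw [dif_neg (by omega)]
  simp

lemma profGp_K1 (v : Fin k → Fin n) :
    profGp n G k v (pK1 k) = Sum.inl (Sum.inl (1 : Fin 4)) := by
  simp only [profGp, pK1]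
  rw [dif_neg (by omega), if_neg (by omega)]
  simp

lemma profGp_K2 (v : Fin k → Fin n) :
    profGp n G k v (pK2 k) = Sum.inl (Sum.inl (2 : Fin 4)) := by
  simp only [profGp, pK2]
  split_ifs <;> simp_all [pK2]

lemma profGp_inj (v : Fin k → Fin n) (hv : Function.Injective v) :
    Function.Injective (profGp n G k v) := by
  intro i j hij
  by_cases hi : (i : ℕ) < k <;> by_cases hj : (j : ℕ) < k
  · rw [profGp_lt v i hi, profGp_lt v j hj] at hij
    simp only [Sum.inr.injEq, Sum.inl.injEq] at hij
    have := hv hij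
    simp only [Fin.mk.injEq] at this
    exact Fin.ext this
  all_goals {
    simp only [profGp] at hij
    split_ifs at hij with h1 h2 h3 h4 h5 h6 <;>
      simp_all <;> exact Fin.ext (by omega) }

lemma profGp_std (v : Fin k → Fin n) (hv : Function.Injective v) :
    StdProf (profGp n G k v) (pK k) (pK1 k) (pK2 k) where
  inj := profGp_inj v hv
  hK := profGp_K v
  hK1 := profGp_K1 v
  hK2 := profGp_K2 v
  hpos j := by
    by_cases hj : (j : ℕ) < k
    · exact Or.inl ⟨v ⟨j, hj⟩, profGp_lt v j hj⟩
    · have : (j : ℕ) = k ∨ (j : ℕ) = k + 1 ∨ (j : ℕ) = k + 2 := by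
        have := j.isLt; omega
      rcases this with hh | hh | hh
      · exact Or.inr (Or.inr (Or.inl (Fin.ext hh)))
      · exact Or.inr (Or.inr (Or.inr (Or.inl (Fin.ext hh))))
      · exact Or.inr (Or.inr (Or.inr (Or.inr (Fin.ext hh))))

variable (v : Fin k → Fin n)

/-- The deviating profile: player `i₀` moves to `a₁`. -/
lemma profGp_update_std (hv : Function.Injective v) (i₀ : Fin k) :
    StdProf (Function.update (profGp n G k v) ⟨i₀, by omega⟩ (Sum.inl (Sum.inl (0 : Fin 4))))
      (pK k) (pK1 k) (pK2 k) := by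
  set p₀ : Fin (k + 3) := ⟨i₀, by omega⟩ with hp₀
  have hKne : pK k ≠ p₀ := by simp [pK, hp₀, Fin.ext_iff]; omega
  have hK1ne : pK1 k ≠ p₀ := by simp [pK1, hp₀, Fin.ext_iff]; omega
  have hK2ne : pK2 k ≠ p₀ := by simp [pK2, hp₀, Fin.ext_iff]; omega
  have hnr : ∀ j, profGp n G k v j ≠ Sum.inl (Sum.inl (0 : Fin 4)) := by
    intro j
    by_cases hj : (j : ℕ) < k
    · rw [profGp_lt v j hj]; simp
    · have : (j : ℕ) = k ∨ (j : ℕ) = k + 1 ∨ (j : ℕ) = k + 2 := by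
        have := j.isLt; omega
      rcases this with hh | hh | hh
      · rw [show j = pK k from Fin.ext hh, profGp_K]; simp
      · rw [show j = pK1 k from Fin.ext hh, profGp_K1]; simp [Fin.ext_iff]
      · rw [show j = pK2 k from Fin.ext hh, profGp_K2]; simp [Fin.ext_iff]
  refine ⟨?_, ?_, ?_, ?_, ?_⟩
  · intro x y hxy
    rcases eq_or_ne x p₀ with rfl | hx <;> rcases eq_or_ne y p₀ with rfl | hy
    · rfl
    · rw [Function.update_self, Function.update_of_ne hy] at hxy
      exact absurd hxy.symm (hnr y)
    · rw [Function.update_self, Function.update_of_ne hx] at hxy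
      exact absurd hxy (hnr x)
    · rw [Function.update_of_ne hx, Function.update_of_ne hy] at hxy
      exact profGp_inj v hv hxy
  · rw [Function.update_of_ne hKne]; exact profGp_K v
  · rw [Function.update_of_ne hK1ne]; exact profGp_K1 v
  · rw [Function.update_of_ne hK2ne]; exact profGp_K2 v
  · intro j
    rcases eq_or_ne j p₀ with rfl | hj
    · exact Or.inr (Or.inl (Function.update_self _ _ _))
    · rw [Function.update_of_ne hj]
      exact (profGp_std v hv).hpos j
end Inst
section Bounds
variable {n k : ℕ} {G : SimpleGraph (Fin n)} [DecidableRel G.Adj]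

lemma utility_card {V : Type*} [Fintype V] [DecidableEq V] {κ : ℕ} (G' : SimpleGraph V)
    (s : Fin κ → V) (i : Fin κ) :
    utility G' (fun _ => (1 : ℤ)) s i =
      ((Finset.univ.filter (fun x => finalLabel G' s x = some (some i))).card : ℤ) := by
  simp [utility]

lemma profGp_ne_a0 (v : Fin k → Fin n) (j : Fin (k + 3)) :
    profGp n G k v j ≠ Sum.inl (Sum.inl (0 : Fin 4)) := by
  by_cases hj : (j : ℕ) < k
  · rw [profGp_lt v j hj]; simp
  · have : (j : ℕ) = k ∨ (j : ℕ) = k + 1 ∨ (j : ℕ) = k + 2 := by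
      have := j.isLt; omega
    rcases this with hh | hh | hh
    · rw [show j = pK k from Fin.ext hh, profGp_K]; simp
    · rw [show j = pK1 k from Fin.ext hh, profGp_K1]; simp [Fin.ext_iff]
    · rw [show j = pK2 k from Fin.ext hh, profGp_K2]; simp [Fin.ext_iff]

lemma lower_bound (v : Fin k → Fin n) (hv : Function.Injective v) (i₀ : Fin k) :
    ((n : ℤ) + 1) ≤ utility (Gp n G) (fun _ => (1 : ℤ))
      (Function.update (profGp n G k v) ⟨i₀, by omega⟩ (Sum.inl (Sum.inl (0 : Fin 4))))
      ⟨i₀, by omega⟩ := by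
  set p₀ : Fin (k + 3) := ⟨i₀, by omega⟩ with hp₀
  set s' := Function.update (profGp n G k v) p₀ (Sum.inl (Sum.inl (0 : Fin 4))) with hs'
  have hstd := profGp_update_std (G := G) v hv i₀
  have hfin : finalLabel (Gp n G) s' = L2f s' (pK k) (pK1 k) (pK2 k) := final_eq hstd
  have hup : s' p₀ = Sum.inl (Sum.inl (0 : Fin 4)) := by rw [hs']; simp
  have hA0 : ∃ j, s' j = Sum.inl (Sum.inl (0 : Fin 4)) := ⟨p₀, hup⟩
  have hch : hA0.choose = p₀ := hstd.inj (hA0.choose_spec.trans hup.symm)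
  rw [utility_card (Gp n G) s' p₀]
  have hsub : insert (Sum.inl (Sum.inl (0 : Fin 4)) : VGp n G)
      ((Finset.univ : Finset (Fin n)).image
        (fun t => (Sum.inl (Sum.inr (Sum.inl t)) : VGp n G))) ⊆
      Finset.univ.filter (fun x => finalLabel (Gp n G) s' x = some (some p₀)) := by
    intro x hx
    rw [Finset.mem_insert] at hx
    rcases hx with rfl | hx
    · refine Finset.mem_filter.2 ⟨Finset.mem_univ _, ?_⟩
      rw [hfin]
      simp only [L2f, fin4_val0, if_true]
      rw [dif_pos hA0, hch]
    · obtain ⟨t, -, rfl⟩ := Finset.mem_image.1 hx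
      refine Finset.mem_filter.2 ⟨Finset.mem_univ _, ?_⟩
      rw [hfin]
      simp only [L2f]
      rw [dif_pos hA0, hch]
  have hcard : (insert (Sum.inl (Sum.inl (0 : Fin 4)) : VGp n G)
      ((Finset.univ : Finset (Fin n)).image
        (fun t => (Sum.inl (Sum.inr (Sum.inl t)) : VGp n G)))).card = n + 1 := by
    rw [Finset.card_insert_of_notMem (by simp)]
    rw [Finset.card_image_of_injective _ (fun a b hab => by simpa using hab)]
    simp
  have := Finset.card_le_card hsub
  rw [hcard] at this
  exact_mod_cast this
end Bounds
section Upper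
variable {n k : ℕ} {G : SimpleGraph (Fin n)} [DecidableRel G.Adj]

/-- Injection used to bound the number of vertices dominated by player `i₀`. -/
def injMap (G : SimpleGraph (Fin n)) [DecidableRel G.Adj] (w : Fin n) :
    VGp n G → Option (Fin n ⊕ ℕ) := fun x =>
  match x with
  | Sum.inr (Sum.inr (Sum.inl e)) =>
      if h : ∃ u, G.Adj w u ∧ (e : Sym2 (Fin n)) = s(w, u) then some (Sum.inl h.choose)
      else none
  | Sum.inr (Sum.inr (Sum.inr (Sum.inl pt))) => some (Sum.inr (pt.2 : ℕ))
  | _ => none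

lemma upper_bound (v : Fin k → Fin n) (hv : Function.Injective v) (i₀ j₀ : Fin k)
    (hij : i₀ ≠ j₀) (hadj : G.Adj (v i₀) (v j₀)) :
    utility (Gp n G) (fun _ => (1 : ℤ)) (profGp n G k v) ⟨i₀, by omega⟩ ≤ (n : ℤ) := by
  set p₀ : Fin (k + 3) := ⟨i₀, by omega⟩ with hp₀
  set s : Fin (k + 3) → VGp n G := profGp n G k v with hs
  have hstd := profGp_std (G := G) v hv
  have hfin : finalLabel (Gp n G) s = L2f s (pK k) (pK1 k) (pK2 k) := final_eq hstd
  have hA0 : ¬∃ j, s j = Sum.inl (Sum.inl (0 : Fin 4)) :=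
    fun ⟨j, hj⟩ => profGp_ne_a0 v j hj
  have hi₀lt := i₀.isLt
  have hσp₀ : s p₀ = Sum.inr (Sum.inl (v i₀)) := by
    rw [hs, profGp_lt v p₀ (by exact hi₀lt)]
  have hσpj₀ : s (⟨j₀, by omega⟩ : Fin (k + 3)) = Sum.inr (Sum.inl (v j₀)) := by
    rw [hs, profGp_lt v _ (by exact j₀.isLt)]
  have hKne : ¬ pK k = p₀ := by simp [pK, hp₀, Fin.ext_iff]; omega
  have hK1ne : ¬ pK1 k = p₀ := by simp [pK1, hp₀, Fin.ext_iff]; omega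
  have hK2ne : ¬ pK2 k = p₀ := by simp [pK2, hp₀, Fin.ext_iff]; omega
  rw [utility_card (Gp n G) s p₀]
  -- characterize the vertices finally dominated by p₀
  have hshape : ∀ x : VGp n G, L2f s (pK k) (pK1 k) (pK2 k) x = some (some p₀) →
      x = Sum.inr (Sum.inl (v i₀)) ∨
      (∃ e : G.edgeSet, x = Sum.inr (Sum.inr (Sum.inl e)) ∧ v i₀ ∈ (e : Sym2 (Fin n)) ∧
        (∃! jj : Fin (k + 3), ∃ q, s jj = Sum.inr (Sum.inl q) ∧ q ∈ (e : Sym2 (Fin n)))) ∨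
      (∃ t : Fin (n - G.degree (v i₀)),
        x = Sum.inr (Sum.inr (Sum.inr (Sum.inl ⟨v i₀, t⟩)))) := by
    intro x hx
    rcases x with ((i | (t | t)) | (p | (e | (⟨p, t⟩ | (⟨⟩ | t)))))
    · simp only [L2f] at hx
      by_cases h1 : (i : ℕ) = 0
      · rw [if_pos h1, dif_neg hA0] at hx
        exact absurd (by simpa using hx) hK1ne
      · rw [if_neg h1] at hx
        by_cases h2 : (i : ℕ) = 1
        · rw [if_pos h2] at hx
          exact absurd (by simpa using hx) hK1ne
        · rw [if_neg h2] at hx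
          exact absurd (by simpa using hx) hK2ne
    · simp only [L2f] at hx
      rw [dif_neg hA0] at hx
      simp only [Option.some.injEq] at hx
      exact absurd hx hK1ne
    · simp only [L2f, Option.some.injEq] at hx
      exact absurd hx hK2ne
    · simp only [L2f] at hx
      by_cases hocc : ∃ j, s j = Sum.inr (Sum.inl p)
      · rw [dif_pos hocc] at hx
        simp only [Option.some.injEq] at hx
        have : s p₀ = Sum.inr (Sum.inl p) := hx ▸ hocc.choose_spec
        rw [hσp₀] at this
        simp only [Sum.inr.injEq, Sum.inl.injEq] at this
        exact Or.inl (by rw [this])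
      · rw [dif_neg hocc] at hx
        simp only [Option.some.injEq] at hx
        exact absurd hx hKne
    · simp only [L2f] at hx
      by_cases hQu : ∃! jj : Fin (k + 3), ∃ q, s jj = Sum.inr (Sum.inl q) ∧
          q ∈ (e : Sym2 (Fin n))
      · rw [dif_pos hQu] at hx
        simp only [Option.some.injEq] at hx
        obtain ⟨q, hq1, hq2⟩ := hx ▸ hQu.choose_spec.1
        rw [hσp₀] at hq1
        simp only [Sum.inr.injEq, Sum.inl.injEq] at hq1
        exact Or.inr (Or.inl ⟨e, rfl, hq1 ▸ hq2, hQu⟩)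
      · rw [dif_neg hQu] at hx
        split_ifs at hx with h1
        · simp at hx
        · simp only [Option.some.injEq] at hx
          exact absurd hx hKne
    · simp only [L2f] at hx
      by_cases hocc : ∃ j, s j = Sum.inr (Sum.inl p)
      · rw [dif_pos hocc] at hx
        simp only [Option.some.injEq] at hx
        have : s p₀ = Sum.inr (Sum.inl p) := hx ▸ hocc.choose_spec
        rw [hσp₀] at this
        simp only [Sum.inr.injEq, Sum.inl.injEq] at this
        subst this
        exact Or.inr (Or.inr ⟨t, rfl⟩)
      · rw [dif_neg hocc] at hx
        simp only [Option.some.injEq] at hx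
        exact absurd hx hKne
    · simp only [L2f, Option.some.injEq] at hx
      exact absurd hx hKne
    · simp only [L2f, Option.some.injEq] at hx
      exact absurd hx hKne
  -- the target finset
  set d := G.degree (v i₀) with hd
  have hmemNb : v j₀ ∈ G.neighborFinset (v i₀) := by
    rw [SimpleGraph.mem_neighborFinset]; exact hadj
  set T : Finset (Option (Fin n ⊕ ℕ)) :=
    insert none ((((G.neighborFinset (v i₀)).erase (v j₀)).image (fun u => some (Sum.inl u))) ∪
      (Finset.range (n - d)).image (fun t => some (Sum.inr t))) with hT
  have hcardT : T.card ≤ n := by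
    have h1 : (((G.neighborFinset (v i₀)).erase (v j₀)).image
        (fun u => some (Sum.inl u) : Fin n → Option (Fin n ⊕ ℕ))).card ≤ d - 1 := by
      refine le_trans Finset.card_image_le ?_
      rw [Finset.card_erase_of_mem hmemNb, SimpleGraph.card_neighborFinset_eq_degree]
    have h2 : ((Finset.range (n - d)).image
        (fun t => some (Sum.inr t) : ℕ → Option (Fin n ⊕ ℕ))).card ≤ n - d :=
      le_trans Finset.card_image_le (le_of_eq (Finset.card_range _))
    have h3 : 1 ≤ d := by
      have : 0 < (G.neighborFinset (v i₀)).card := Finset.card_pos.2 ⟨_, hmemNb⟩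
      rwa [SimpleGraph.card_neighborFinset_eq_degree] at this
    have h4 : d < n := by
      have := G.degree_lt_card_verts (v i₀)
      simpa using this
    calc T.card ≤ _ + 1 := Finset.card_insert_le _ _
      _ ≤ ((d - 1) + (n - d)) + 1 := by
          have := Finset.card_union_le
            ((((G.neighborFinset (v i₀)).erase (v j₀)).image (fun u => some (Sum.inl u))))
            ((Finset.range (n - d)).image (fun t => some (Sum.inr t)))
          omega
      _ ≤ n := by omega
  have hexOf : ∀ (e : G.edgeSet), v i₀ ∈ (e : Sym2 (Fin n)) →
      ∃ u, G.Adj (v i₀) u ∧ (e : Sym2 (Fin n)) = s(v i₀, u) := by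
    intro e hmem
    obtain ⟨u, hu⟩ := Sym2.mem_iff_exists.1 hmem
    refine ⟨u, ?_, hu⟩
    have he2 := e.2
    rw [hu] at he2
    exact (G.mem_edgeSet).1 he2
  -- map into T
  have hmaps : ∀ x ∈ Finset.univ.filter
      (fun x => finalLabel (Gp n G) s x = some (some p₀)), injMap G (v i₀) x ∈ T := by
    intro x hx
    rw [Finset.mem_filter, hfin] at hx
    rcases hshape x hx.2 with rfl | ⟨e, rfl, hmem, hQu⟩ | ⟨t, rfl⟩
    · simp only [injMap]
      exact Finset.mem_insert_self _ _
    · have hex := hexOf e hmem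
      simp only [injMap]
      rw [dif_pos hex]
      refine Finset.mem_insert_of_mem (Finset.mem_union_left _ ?_)
      refine Finset.mem_image.2 ⟨hex.choose, ?_, rfl⟩
      refine Finset.mem_erase.2 ⟨?_, ?_⟩
      · -- hex.choose ≠ v j₀
        intro hcontra
        have heq : (e : Sym2 (Fin n)) = s(v i₀, v j₀) := by
          rw [hex.choose_spec.2, hcontra]
        have hQ1 : ∃ q, s p₀ = Sum.inr (Sum.inl q) ∧ q ∈ (e : Sym2 (Fin n)) :=
          ⟨v i₀, hσp₀, hmem⟩
        have hQ2 : ∃ q, s (⟨j₀, by omega⟩ : Fin (k + 3)) = Sum.inr (Sum.inl q) ∧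
            q ∈ (e : Sym2 (Fin n)) :=
          ⟨v j₀, hσpj₀, by rw [heq]; simp⟩
        have := (hQu.choose_spec.2 _ hQ1).trans (hQu.choose_spec.2 _ hQ2).symm
        rw [hp₀, Fin.ext_iff] at this
        exact hij (Fin.ext this)
      · exact SimpleGraph.mem_neighborFinset _ _ _ |>.2 hex.choose_spec.1
    · simp only [injMap]
      refine Finset.mem_insert_of_mem (Finset.mem_union_right _ ?_)
      exact Finset.mem_image.2 ⟨(t : ℕ), Finset.mem_range.2 (by simpa [hd] using t.isLt), rfl⟩
  -- injectivity on the filter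
  have hinj : Set.InjOn (injMap G (v i₀))
      (Finset.univ.filter (fun x => finalLabel (Gp n G) s x = some (some p₀))) := by
    intro x hx y hy hxy
    rw [Finset.coe_filter] at hx hy
    simp only [Set.mem_setOf_eq, Finset.mem_univ, true_and] at hx hy
    rw [hfin] at hx hy
    rcases hshape x hx with rfl | ⟨e, rfl, hmem, hQu⟩ | ⟨t, rfl⟩ <;>
      rcases hshape y hy with rfl | ⟨e', rfl, hmem', hQu'⟩ | ⟨t', rfl⟩ <;>
      simp only [injMap] at hxy
    · rfl
    · rw [dif_pos (hexOf e' hmem')] at hxy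
      exact absurd hxy (by simp)
    · exact absurd hxy (by simp)
    · rw [dif_pos (hexOf e hmem)] at hxy
      exact absurd hxy (by simp)
    · have hex := hexOf e hmem
      have hex' := hexOf e' hmem'
      rw [dif_pos hex, dif_pos hex'] at hxy
      simp only [Option.some.injEq, Sum.inl.injEq] at hxy
      have heq : (e : Sym2 (Fin n)) = (e' : Sym2 (Fin n)) := by
        rw [hex.choose_spec.2, hex'.choose_spec.2, hxy]
      rw [Subtype.ext heq]
    · rw [dif_pos (hexOf e hmem)] at hxy
      exact absurd hxy (by simp)
    · exact absurd hxy (by simp)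
    · rw [dif_pos (hexOf e' hmem')] at hxy
      exact absurd hxy (by simp)
    · have : t = t' := Fin.ext (by simpa using hxy)
      rw [this]
  have hcard := Finset.card_le_card_of_injOn _ hmaps hinj
  have : (Finset.univ.filter
      (fun x => finalLabel (Gp n G) s x = some (some p₀))).card ≤ n := le_trans hcard hcardT
  exact_mod_cast this
end Upper

/-- if a standard strategy profile (k players on distinct original
vertices `v 0, …, v (k−1)`, one player on `b`, two players on `a_2`, `a_3`) is a
pure Nash equilibrium of the `(k+3)`-player game on `G'`, then
`{v 0, …, v (k−1)}` is an independent set of `G`. -/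
theorem Gp_nash_to_independent (n k : ℕ) (G : SimpleGraph (Fin n))
    [DecidableRel G.Adj] (v : Fin k → Fin n) (hv : Function.Injective v)
    (hnash : isNash (Gp n G) (fun _ => (1 : ℤ)) (profGp n G k v)) :
    ∀ i j : Fin k, i ≠ j → ¬ G.Adj (v i) (v j) := by
  intro i j hij hadj
  have hlow := lower_bound (G := G) v hv i
  have hup := upper_bound (G := G) v hv i j hij hadj
  have hnash' := hnash ⟨i, by omega⟩ (Sum.inl (Sum.inl (0 : Fin 4)))
  have : ((n : ℤ) + 1) ≤ (n : ℤ) := le_trans hlow (le_trans hnash' hup)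
  linarith
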